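/- Let Λ be a strongly G-graded ring with identity component Δ. Then each homogeneous component Λ_g is a finitely generated projective generator (progenerator) as a left Δ-module. -/

import Mathlib

open Pointwise
/-- A strong grading of the ring `Λ` by the group `G`: `Λ` is the internal direct
sum of the additive subgroups `A g`, and `A g * A h = A (g * h)` for all `g, h`. -/
structure IsStrongGrading {G Λ : Type*} [Group G] [Ring Λ] [DecidableEq G]
    (A : G → AddSubgroup Λ) : Prop where
  internal : DirectSum.IsInternal A
  one_mem : (1 : Λ) ∈ A 1
  mul_mem : ∀ (g h : G), ∀ a ∈ A g, ∀ b ∈ A h, a * b ∈ A (g * h)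
  strong : ∀ g h : G, A (g * h) ≤ AddSubgroup.closure ((A g : Set Λ) * (A h : Set Λ))

/-- `Λ_g ≅ Λ_h` as `Δ`-bimodules (`Δ = Λ_1`): an additive equivalence compatible
with left and right multiplication by elements of the identity component. -/
def ComponentBimodIso {G Λ : Type*} [Group G] [Ring Λ]
    (A : G → AddSubgroup Λ) (g h : G) : Prop :=
  ∃ f : A g ≃+ A h,
    (∀ d ∈ A (1 : G), ∀ x y : A g, (y : Λ) = d * (x : Λ) → ((f y : Λ) = d * (f x : Λ))) ∧
    (∀ d ∈ A (1 : G), ∀ x y : A g, (y : Λ) = (x : Λ) * d → ((f y : Λ) = (f x : Λ) * d))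

/-- Any element of the additive closure of a product set `S * T` of two additive
subgroups is a finite sum of products. -/
lemma mem_closure_mul_sum {L : Type*} [Ring L] (S T : AddSubgroup L) {c : L}
    (hc : c ∈ AddSubgroup.closure ((S : Set L) * (T : Set L))) :
    ∃ (n : ℕ) (x y : Fin n → L), (∀ i, x i ∈ S) ∧ (∀ i, y i ∈ T) ∧
      c = ∑ i, x i * y i := by
  induction hc using AddSubgroup.closure_induction with
  | mem a ha =>
    obtain ⟨s, hs, t, ht, rfl⟩ := ha
    exact ⟨1, fun _ => s, fun _ => t, fun _ => hs, fun _ => ht, by simp⟩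
  | zero => exact ⟨0, ![], ![], by simp, by simp, by simp⟩
  | add a b _ _ iha ihb =>
    obtain ⟨n, x, y, hx, hy, rfl⟩ := iha
    obtain ⟨m, x', y', hx', hy', rfl⟩ := ihb
    refine ⟨n + m, Fin.append x x', Fin.append y y', ?_, ?_, ?_⟩
    · intro i
      refine Fin.addCases (fun j => ?_) (fun j => ?_) i
      · rw [Fin.append_left]; exact hx j
      · rw [Fin.append_right]; exact hx' j
    · intro i
      refine Fin.addCases (fun j => ?_) (fun j => ?_) i
      · rw [Fin.append_left]; exact hy j
      · rw [Fin.append_right]; exact hy' j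
    · rw [Fin.sum_univ_add]
      simp [Fin.append_left, Fin.append_right]
  | neg a _ ih =>
    obtain ⟨n, x, y, hx, hy, rfl⟩ := ih
    exact ⟨n, fun i => -x i, y, fun i => neg_mem (hx i), hy, by
      simp [neg_mul, Finset.sum_neg_distrib]⟩

/-- Each homogeneous component `Λ_g` of a strongly `G`-graded
ring is a progenerator as a left `Δ`-module: it is finitely generated projective
(witnessed by a finite dual basis, where left `Δ`-linear functionals
`Λ_g → Δ` are given by right multiplication by elements of `Λ_{g⁻¹}`), and a
generator (its trace ideal contains `1`). -/
theorem component_progenerator {G Λ : Type*} [Group G] [Ring Λ] [DecidableEq G]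
    (A : G → AddSubgroup Λ) (hA : IsStrongGrading A) (g : G) :
    (∃ (n : ℕ) (x y : Fin n → Λ),
        (∀ i, x i ∈ A g) ∧ (∀ i, y i ∈ A g⁻¹) ∧
        ∀ a ∈ A g, a = ∑ i, (a * y i) * x i) ∧
    (∃ (m : ℕ) (w z : Fin m → Λ),
        (∀ j, w j ∈ A g) ∧ (∀ j, z j ∈ A g⁻¹) ∧
        ∑ j, w j * z j = 1) := by
  constructor
  · have h1 : (1 : Λ) ∈ A (g⁻¹ * g) := by rw [inv_mul_cancel]; exact hA.one_mem
    obtain ⟨n, u, v, hu, hv, huv⟩ :=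
      mem_closure_mul_sum (A g⁻¹) (A g) (hA.strong g⁻¹ g h1)
    refine ⟨n, v, u, hv, hu, fun a _ => ?_⟩
    calc a = a * 1 := (mul_one a).symm
    _ = ∑ i, a * u i * v i := by rw [huv, Finset.mul_sum]; simp [mul_assoc]
  · have h1 : (1 : Λ) ∈ A (g * g⁻¹) := by rw [mul_inv_cancel]; exact hA.one_mem
    obtain ⟨m, w, z, hw, hz, hwz⟩ :=
      mem_closure_mul_sum (A g) (A g⁻¹) (hA.strong g g⁻¹ h1)
    exact ⟨m, w, z, hw, hz, hwz.symm⟩
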